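/- For all real numbers s, t ≥ 0 and every A > 0, the inequality s·t ≤ A·s·log(e + s) + A·e^{t/A} holds. -/

import Mathlib

theorem stmt_1 (s t A : ℝ) (hs : 0 ≤ s) (ht : 0 ≤ t) (hA : 0 < A) :
    s * t ≤ A * s * Real.log (Real.exp 1 + s) + A * Real.exp (t / A) := by
  set u : ℝ := t / A with hu
  set u0 : ℝ := Real.log (Real.exp 1 + s) with hu0
  have hes : (0:ℝ) < Real.exp 1 + s := by positivity
  have hexp0 : Real.exp u0 = Real.exp 1 + s := Real.exp_log hes
  have ht' : t = A * u := by rw [hu]; field_simp [hA.ne']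
  have key : s * u ≤ s * u0 + Real.exp u := by
    rcases le_or_gt u u0 with h | h
    · nlinarith [mul_le_mul_of_nonneg_left h hs, Real.exp_pos u]
    · have h1 : u - u0 + 1 ≤ Real.exp (u - u0) := Real.add_one_le_exp _
      have h2 : (u - u0 + 1) * Real.exp u0 ≤ Real.exp u := by
        calc (u - u0 + 1) * Real.exp u0 ≤ Real.exp (u - u0) * Real.exp u0 :=
              mul_le_mul_of_nonneg_right h1 (Real.exp_pos u0).le
          _ = Real.exp u := by rw [← Real.exp_add]; ring_nf
      have h3 : (0:ℝ) < Real.exp 1 := Real.exp_pos 1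
      nlinarith [hexp0, h2, h3, hs, h.le]
  calc s * t = A * (s * u) := by rw [ht']; ring
    _ ≤ A * (s * u0 + Real.exp u) := by
        exact mul_le_mul_of_nonneg_left key hA.le
    _ = A * s * u0 + A * Real.exp u := by ring
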